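/- Let a, m be integers with m ≠ 0. Then there exist a natural number s and a positive integer m_s dividing m such that a^(φ(m_s) + s) ≡ a^s (mod m), where φ is Euler's totient function. -/
import Mathlib

theorem stmt6 (a m : ℤ) (hm : m ≠ 0) :
    ∃ (s : ℕ) (n : ℕ), 0 < n ∧ (n : ℤ) ∣ m ∧
      a ^ (Nat.totient n + s) ≡ a ^ s [ZMOD m] := by
  set M : ℕ := m.natAbs with hM
  set A : ℕ := a.natAbs with hA
  have hM0 : 0 < M := Int.natAbs_pos.mpr hm
  set u : ℕ := Nat.gcd M (A ^ M) with hu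
  have huM : u ∣ M := Nat.gcd_dvd_left _ _
  have huA : u ∣ A ^ M := Nat.gcd_dvd_right _ _
  have hu0 : 0 < u := Nat.pos_of_dvd_of_pos huM hM0 |>.trans_le (le_refl _) |>.trans_eq rfl
  set v : ℕ := M / u with hv
  have hv0 : 0 < v := Nat.div_pos (Nat.le_of_dvd hM0 huM) (Nat.pos_of_dvd_of_pos huM hM0)
  have huv : u * v = M := Nat.mul_div_cancel' huM
  -- coprimality of A and v
  have hcop : Nat.Coprime A v := by
    by_contra hc
    obtain ⟨p, hp, hpA, hpv⟩ := Nat.Prime.not_coprime_iff_dvd.mp hc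
    -- p^(v_p(M)) divides u
    have hk : M.factorization p ≤ u.factorization p := by
      apply (Nat.Prime.pow_dvd_iff_le_factorization hp hu0.ne').mp
      apply Nat.dvd_gcd (Nat.ordProj_dvd M p)
      calc (p : ℕ) ^ M.factorization p ∣ p ^ M :=
            pow_dvd_pow p (le_of_lt (Nat.factorization_lt p hM0.ne'))
        _ ∣ A ^ M := pow_dvd_pow_of_dvd hpA M
    have h1 : 1 ≤ v.factorization p :=
      (Nat.Prime.pow_dvd_iff_le_factorization hp hv0.ne').mp (by simpa using hpv)
    have := Nat.factorization_div huM
    have h2 : v.factorization p = M.factorization p - u.factorization p := by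
      rw [hv, this]; rfl
    omega
  refine ⟨M, v, hv0, ?_, ?_⟩
  · exact dvd_trans (Int.natCast_dvd_natCast.mpr (Nat.div_dvd_of_dvd huM))
      (Int.natAbs_dvd.mpr dvd_rfl)
  · -- u divides a^M
    have h2 : (u : ℤ) ∣ a ^ M := by
      rw [← Int.dvd_natAbs]
      exact_mod_cast huA.trans (by rw [Int.natAbs_pow])
    -- v divides a^φ(v) - 1
    haveI : NeZero v := ⟨hv0.ne'⟩
    have hunit : IsUnit ((a : ZMod v)) := by
      rcases Int.natAbs_eq a with h | h
      · rw [h, Int.cast_natCast]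
        exact (ZMod.isUnit_iff_coprime A v).mpr hcop
      · rw [h, Int.cast_neg, Int.cast_natCast]
        exact ((ZMod.isUnit_iff_coprime A v).mpr hcop).neg
    have h1 : (v : ℤ) ∣ a ^ v.totient - 1 := by
      rw [← ZMod.intCast_zmod_eq_zero_iff_dvd]
      push_cast
      obtain ⟨w, hw⟩ := hunit
      rw [← hw, ← Units.val_pow_eq_pow_val, ZMod.pow_totient w, Units.val_one, sub_self]
    have hdvd : m ∣ a ^ (v.totient + M) - a ^ M := by
      have hMdvd : (M : ℤ) ∣ a ^ (v.totient + M) - a ^ M := by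
        have : ((u : ℤ) * v) ∣ a ^ M * (a ^ v.totient - 1) := mul_dvd_mul h2 h1
        have he : a ^ M * (a ^ v.totient - 1) = a ^ (v.totient + M) - a ^ M := by
          rw [pow_add]; ring
        rwa [he, show ((u:ℤ) * v) = (M : ℤ) by exact_mod_cast huv] at this
      exact Int.natAbs_dvd.mp hMdvd
    exact (Int.modEq_iff_dvd.mpr (by simpa using hdvd)).symm
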